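/- Let (S, v) be an arborescent poset with consistent anti-linearization v : S ↪ [1,m]. If (i,j) is a minimal S-disorder for an S-dominant composition d = (d_1,...,d_m), then the composition (ij)·d obtained by swapping d_i and d_j is again S-dominant, and d is strictly less than (ij)·d in the Bruhat partial order on the S_m-orbit of d. -/
import Mathlib


/-- An arborescent poset with consistent anti-linearization: a poset `S` with an
order-reversing injection `v : S → Fin m` such that whenever `v s < v t < v r` and
`r < s`, also `r < t`. -/
structure AntiLin (S : Type*) [PartialOrder S] (m : ℕ) where
  v : S → Fin m
  inj : Function.Injective v
  anti : ∀ ⦃s t : S⦄, t < s → v s < v t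
  cons : ∀ ⦃s t r : S⦄, v s < v t → v t < v r → r < s → r < t

/-- A composition `d` is `S`-dominant: it vanishes outside the image of `v`, and
`d (v t) ≤ d (v s)` whenever `t < s` in `S`. -/
def SDominant {S : Type*} [PartialOrder S] {m : ℕ} (A : AntiLin S m)
    (d : Fin m → ℕ) : Prop :=
  (∀ l : Fin m, (∀ s : S, A.v s ≠ l) → d l = 0) ∧
  (∀ s t : S, t < s → d (A.v t) ≤ d (A.v s))

/-- `(i, j)` is a minimal `S`-disorder for the composition `d`: `i < j`, the preimages
of `i` and `j` under `v` are incomparable, `d i > d j`, and for every `l` with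
`i < l < j` lying in the image of `v`: if `v⁻¹ l ≺ v⁻¹ i` then `d l ≤ d j`; if
`v⁻¹ l ≻ v⁻¹ j` then `d l ≥ d i`; and if `v⁻¹ l` is incomparable with both then
`d l ∉ [d j, d i]`. -/
def MinDisorder {S : Type*} [PartialOrder S] {m : ℕ} (A : AntiLin S m)
    (d : Fin m → ℕ) (i j : Fin m) : Prop :=
  i < j ∧ d j < d i ∧
  ∃ si sj : S, A.v si = i ∧ A.v sj = j ∧ ¬ si ≤ sj ∧ ¬ sj ≤ si ∧
    ∀ (l : Fin m) (sl : S), A.v sl = l → i < l → l < j →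
      (sl < si → d l ≤ d j) ∧ (sj < sl → d i ≤ d l) ∧
      ((¬ sl ≤ si ∧ ¬ si ≤ sl ∧ ¬ sl ≤ sj ∧ ¬ sj ≤ sl) →
        ¬(d j ≤ d l ∧ d l ≤ d i))

/-- One step up in the Bruhat order on compositions: swap two entries in disorder. -/
def BruhatStep {m : ℕ} (d d' : Fin m → ℕ) : Prop :=
  ∃ i j : Fin m, i < j ∧ d j < d i ∧ d' = d ∘ Equiv.swap i j

/-- The Bruhat partial order on (an `S_m`-orbit of) compositions: the reflexive
transitive closure of disorder swaps. -/
def BruhatLE {m : ℕ} : (Fin m → ℕ) → (Fin m → ℕ) → Prop :=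
  Relation.ReflTransGen BruhatStep

/-- Strict Bruhat order. -/
def BruhatLT {m : ℕ} (d d' : Fin m → ℕ) : Prop :=
  BruhatLE d d' ∧ d ≠ d'

/-- If `(i, j)` is a minimal `S`-disorder for an `S`-dominant composition `d`, then
the composition obtained by swapping the entries at `i` and `j` is again
`S`-dominant, and `d` is strictly smaller than it in the Bruhat order. -/
theorem stmt_9 {S : Type*} [PartialOrder S] [Finite S] {m : ℕ} (A : AntiLin S m)
    (d : Fin m → ℕ) (i j : Fin m)
    (hdom : SDominant A d) (hdis : MinDisorder A d i j) :
    SDominant A (d ∘ Equiv.swap i j) ∧ BruhatLT d (d ∘ Equiv.swap i j) := by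
  obtain ⟨hij, hdji, si, sj, hvi, hvj, hns, hns', hmin⟩ := hdis
  obtain ⟨hz, hmono⟩ := hdom
  refine ⟨⟨?_, ?_⟩, ?_, ?_⟩
  · intro l hl
    have hli : l ≠ i := fun h => hl si (h ▸ hvi)
    have hlj : l ≠ j := fun h => hl sj (h ▸ hvj)
    rw [Function.comp_apply, Equiv.swap_apply_of_ne_of_ne hli hlj]
    exact hz l hl
  · intro s t hts
    simp only [Function.comp_apply]
    by_cases hsi : s = si
    · have hvsi : A.v s = i := by rw [hsi, hvi]
      rw [hvsi, Equiv.swap_apply_left]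
      have hvt : i < A.v t := hvsi ▸ A.anti hts
      have htj : t ≠ sj := by rintro rfl; exact hns' (hsi ▸ hts.le)
      have hvtj : A.v t ≠ j := fun h => htj (A.inj (h.trans hvj.symm))
      rw [Equiv.swap_apply_of_ne_of_ne (ne_of_gt hvt) hvtj]
      rcases lt_or_gt_of_ne hvtj with h | h
      · exact (hmin (A.v t) t rfl hvt h).1 (hsi ▸ hts)
      · have h1 : A.v si < A.v sj := by rw [hvi, hvj]; exact hij
        have h2 : A.v sj < A.v t := by rw [hvj]; exact h
        have := A.cons h1 h2 (hsi ▸ hts)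
        calc d (A.v t) ≤ d (A.v sj) := hmono sj t this
          _ = d j := by rw [hvj]
    · by_cases hti : t = si
      · have hvti : A.v t = i := by rw [hti, hvi]
        rw [hvti, Equiv.swap_apply_left]
        have hvs : A.v s < i := hvti ▸ A.anti hts
        rw [Equiv.swap_apply_of_ne_of_ne (ne_of_lt hvs) (ne_of_lt (hvs.trans hij))]
        have : d i ≤ d (A.v s) := by
          have := hmono s t hts; rwa [hvti] at this
        exact le_trans hdji.le this
      · by_cases hsj : s = sj
        · have hvsj : A.v s = j := by rw [hsj, hvj]
          rw [hvsj, Equiv.swap_apply_right]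
          have hvt : j < A.v t := hvsj ▸ A.anti hts
          rw [Equiv.swap_apply_of_ne_of_ne (ne_of_gt (hij.trans hvt)) (ne_of_gt hvt)]
          have : d (A.v t) ≤ d j := by
            have := hmono s t hts; rwa [hvsj] at this
          exact le_trans this hdji.le
        · by_cases htj : t = sj
          · have hvtj : A.v t = j := by rw [htj, hvj]
            rw [hvtj, Equiv.swap_apply_right]
            have hvs : A.v s < j := hvtj ▸ A.anti hts
            have hvsi : A.v s ≠ i := fun h => hsi (A.inj (h.trans hvi.symm))
            rw [Equiv.swap_apply_of_ne_of_ne hvsi (ne_of_lt hvs)]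
            rcases lt_or_gt_of_ne hvsi with h | h
            · have h1 : A.v s < A.v si := by rw [hvi]; exact h
              have h2 : A.v si < A.v sj := by rw [hvi, hvj]; exact hij
              exact absurd (A.cons h1 h2 (htj ▸ hts)).le hns'
            · exact (hmin (A.v s) s rfl h hvs).2.1 (htj ▸ hts)
          · have hvsi' : A.v s ≠ i := fun h => hsi (A.inj (h.trans hvi.symm))
            have hvsj' : A.v s ≠ j := fun h => hsj (A.inj (h.trans hvj.symm))
            have hvti' : A.v t ≠ i := fun h => hti (A.inj (h.trans hvi.symm))
            have hvtj' : A.v t ≠ j := fun h => htj (A.inj (h.trans hvj.symm))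
            rw [Equiv.swap_apply_of_ne_of_ne hvsi' hvsj',
                Equiv.swap_apply_of_ne_of_ne hvti' hvtj']
            exact hmono s t hts
  · exact Relation.ReflTransGen.single ⟨i, j, hij, hdji, rfl⟩
  · intro h
    have := congrFun h i
    simp only [Function.comp_apply, Equiv.swap_apply_left] at this
    exact absurd this.symm (ne_of_lt hdji)
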